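/- (Theorem 1) Let u₁, u₂ ∈ ℝ³ be unit vectors (Alice's measurement directions) and let v₁, v₂ ∈ ℝ³ be orthonormal vectors (Bob's measurement directions). Let O := (1/√2)((u₁·σ) ⊗ (v₁·σ) + (u₂·σ) ⊗ (v₂·σ)) be the 2-settings linear steering operator. Then there exists a unit vector ψ ∈ ℂ^(Fin 2 × Fin 2) with |⟨ψ, Oψ⟩| > 1 if and only if the matrices u₁·σ and u₂·σ do not commute, i.e., (u₁·σ)(u₂·σ) ≠ (u₂·σ)(u₁·σ). -/

import Mathlib

open Matrix Kronecker Complex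

/-- The Pauli matrix σ₁. -/
noncomputable def σ1 : Matrix (Fin 2) (Fin 2) ℂ := !![0, 1; 1, 0]

/-- The Pauli matrix σ₂. -/
noncomputable def σ2 : Matrix (Fin 2) (Fin 2) ℂ := !![0, -Complex.I; Complex.I, 0]

/-- The Pauli matrix σ₃. -/
noncomputable def σ3 : Matrix (Fin 2) (Fin 2) ℂ := !![1, 0; 0, -1]

/-- For `a ∈ ℝ³`, the observable `a·σ = a₁σ₁ + a₂σ₂ + a₃σ₃`. -/
noncomputable def pauliDot (a : Fin 3 → ℝ) : Matrix (Fin 2) (Fin 2) ℂ :=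
  (a 0 : ℂ) • σ1 + (a 1 : ℂ) • σ2 + (a 2 : ℂ) • σ3

noncomputable def crossP (a b : Fin 3 → ℝ) : Fin 3 → ℝ :=
  ![a 1 * b 2 - a 2 * b 1, a 2 * b 0 - a 0 * b 2, a 0 * b 1 - a 1 * b 0]

lemma pauli_mul (a b : Fin 3 → ℝ) :
    pauliDot a * pauliDot b = ((a ⬝ᵥ b : ℝ) : ℂ) • 1 + Complex.I • pauliDot (crossP a b) := by
  ext i j
  fin_cases i <;> fin_cases j <;>
    simp [pauliDot, σ1, σ2, σ3, crossP, Matrix.mul_apply, Fin.sum_univ_two, dotProduct,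
      Fin.sum_univ_three, Matrix.one_apply, Complex.ext_iff] <;> push_cast <;> ring_nf <;> simp

lemma pauliDot_eq_zero_iff {a : Fin 3 → ℝ} : pauliDot a = 0 ↔ a = 0 := by
  constructor
  · intro h
    have h00 := congrFun (congrFun h 0) 0
    have h01 := congrFun (congrFun h 0) 1
    simp [pauliDot, σ1, σ2, σ3, Complex.ext_iff] at h00 h01
    funext i
    fin_cases i <;> simp [h01, h00]
  · intro h; subst h; ext i j; fin_cases i <;> fin_cases j <;> simp [pauliDot, σ1, σ2, σ3]

lemma pauliDot_conjT (a : Fin 3 → ℝ) : (pauliDot a)ᴴ = pauliDot a := by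
  ext i j
  fin_cases i <;> fin_cases j <;>
    simp [pauliDot, σ1, σ2, σ3, Matrix.conjTranspose_apply, Complex.ext_iff]

lemma pauliDot_zero : pauliDot 0 = 0 := by
  ext i j; fin_cases i <;> fin_cases j <;> simp [pauliDot, σ1, σ2, σ3]

lemma pauliDot_trace (a : Fin 3 → ℝ) : (pauliDot a).trace = 0 := by
  simp [Matrix.trace, pauliDot, σ1, σ2, σ3, Fin.sum_univ_two]

lemma crossP_self (a : Fin 3 → ℝ) : crossP a a = 0 := by
  funext i; fin_cases i <;> simp [crossP] <;> ring

lemma crossP_swap (a b : Fin 3 → ℝ) : crossP b a = -crossP a b := by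
  funext i; fin_cases i <;> simp [crossP] <;> ring

lemma pauliDot_neg (a : Fin 3 → ℝ) : pauliDot (-a) = -pauliDot a := by
  ext i j; fin_cases i <;> fin_cases j <;> simp [pauliDot, σ1, σ2, σ3] <;> ring

lemma pauli_sq {a : Fin 3 → ℝ} (ha : a ⬝ᵥ a = 1) : pauliDot a * pauliDot a = 1 := by
  rw [pauli_mul, crossP_self, pauliDot_zero, ha]; simp

lemma crossP_dot (a b : Fin 3 → ℝ) :
    crossP a b ⬝ᵥ crossP a b = (a ⬝ᵥ a) * (b ⬝ᵥ b) - (a ⬝ᵥ b) ^ 2 := by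
  simp [crossP, dotProduct, Fin.sum_univ_three]; ring

lemma kronecker_conjT (A B : Matrix (Fin 2) (Fin 2) ℂ) : (A ⊗ₖ B)ᴴ = Aᴴ ⊗ₖ Bᴴ := by
  ext ⟨i, j⟩ ⟨k, l⟩
  simp [Matrix.conjTranspose_apply, Matrix.kroneckerMap_apply, mul_comm]

lemma O_sq (u₁ u₂ v₁ v₂ : Fin 3 → ℝ)
    (hu₁ : u₁ ⬝ᵥ u₁ = 1) (hu₂ : u₂ ⬝ᵥ u₂ = 1) (hv₁ : v₁ ⬝ᵥ v₁ = 1) (hv₂ : v₂ ⬝ᵥ v₂ = 1)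
    (hv₁₂ : v₁ ⬝ᵥ v₂ = 0)
    (O : Matrix (Fin 2 × Fin 2) (Fin 2 × Fin 2) ℂ)
    (hO : O = ((1 / Real.sqrt 2 : ℝ) : ℂ) •
      (pauliDot u₁ ⊗ₖ pauliDot v₁ + pauliDot u₂ ⊗ₖ pauliDot v₂)) :
    O * O = 1 - (pauliDot (crossP u₁ u₂)) ⊗ₖ (pauliDot (crossP v₁ v₂)) := by
  set W := pauliDot (crossP u₁ u₂) with hW
  set N := pauliDot (crossP v₁ v₂) with hN
  set d : ℂ := ((u₁ ⬝ᵥ u₂ : ℝ) : ℂ) with hd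
  have hAC : pauliDot u₁ * pauliDot u₂ = d • 1 + Complex.I • W := pauli_mul _ _
  have hCA : pauliDot u₂ * pauliDot u₁ = d • 1 + (-Complex.I) • W := by
    rw [pauli_mul, dotProduct_comm, crossP_swap, pauliDot_neg, ← hW, smul_neg, neg_smul]
  have hBD : pauliDot v₁ * pauliDot v₂ = Complex.I • N := by
    rw [pauli_mul, hv₁₂]; simp; rfl
  have hDB : pauliDot v₂ * pauliDot v₁ = (-Complex.I) • N := by
    rw [pauli_mul, dotProduct_comm v₂ v₁, hv₁₂, crossP_swap, pauliDot_neg, ← hN]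
    simp [smul_neg, neg_smul]
  have h0a : (pauliDot u₁ ⊗ₖ pauliDot v₁) * (pauliDot u₁ ⊗ₖ pauliDot v₁)
      = (1 : Matrix (Fin 2 × Fin 2) (Fin 2 × Fin 2) ℂ) := by
    rw [← mul_kronecker_mul, pauli_sq hu₁, pauli_sq hv₁, one_kronecker_one]
  have h0b : (pauliDot u₂ ⊗ₖ pauliDot v₂) * (pauliDot u₂ ⊗ₖ pauliDot v₂)
      = (1 : Matrix (Fin 2 × Fin 2) (Fin 2 × Fin 2) ℂ) := by
    rw [← mul_kronecker_mul, pauli_sq hu₂, pauli_sq hv₂, one_kronecker_one]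
  have h1 : (pauliDot u₁ ⊗ₖ pauliDot v₁) * (pauliDot u₂ ⊗ₖ pauliDot v₂)
      = (Complex.I * d) • ((1 : Matrix (Fin 2) (Fin 2) ℂ) ⊗ₖ N) - W ⊗ₖ N := by
    rw [← mul_kronecker_mul, hAC, hBD, kronecker_smul, add_kronecker, smul_kronecker,
      smul_kronecker, smul_add, smul_smul, smul_smul, Complex.I_mul_I, neg_one_smul,
      sub_eq_add_neg]
  have h2 : (pauliDot u₂ ⊗ₖ pauliDot v₂) * (pauliDot u₁ ⊗ₖ pauliDot v₁)
      = -((Complex.I * d) • ((1 : Matrix (Fin 2) (Fin 2) ℂ) ⊗ₖ N)) - W ⊗ₖ N := by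
    rw [← mul_kronecker_mul, hCA, hDB, kronecker_smul, add_kronecker, smul_kronecker,
      smul_kronecker, smul_add, smul_smul, smul_smul]
    have e1 : -Complex.I * d = -(Complex.I * d) := by ring
    have e2 : -Complex.I * -Complex.I = -1 := by
      simp [mul_neg, neg_mul, Complex.I_mul_I]
    rw [e1, e2, neg_one_smul, neg_smul, sub_eq_add_neg]
  have key : (pauliDot u₁ ⊗ₖ pauliDot v₁ + pauliDot u₂ ⊗ₖ pauliDot v₂) *
      (pauliDot u₁ ⊗ₖ pauliDot v₁ + pauliDot u₂ ⊗ₖ pauliDot v₂)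
      = (2 : ℂ) • (1 - W ⊗ₖ N) := by
    rw [add_mul, mul_add, mul_add, h0a, h0b, h1, h2]
    module
  rw [hO, smul_mul_smul_comm, key, smul_smul]
  have h2' : ((Real.sqrt 2 : ℝ) : ℂ) * ((Real.sqrt 2 : ℝ) : ℂ) = 2 := by
    norm_cast
    rw [Real.mul_self_sqrt] <;> norm_num
  have hc : ((1 / Real.sqrt 2 : ℝ) : ℂ) * ((1 / Real.sqrt 2 : ℝ) : ℂ) * 2 = 1 := by
    push_cast
    field_simp
    rw [sq, h2']
  rw [hc, one_smul]

lemma star_dot_self (ψ : (Fin 2 × Fin 2) → ℂ) :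
    star ψ ⬝ᵥ ψ = ((∑ i, Complex.normSq (ψ i) : ℝ) : ℂ) := by
  simp only [dotProduct, Pi.star_apply, Complex.star_def]
  push_cast
  congr 1
  funext i
  exact (Complex.normSq_eq_conj_mul_self).symm

lemma exists_unit_of_eigen (O : Matrix (Fin 2 × Fin 2) (Fin 2 × Fin 2) ℂ) (μ : ℝ)
    (ψ : (Fin 2 × Fin 2) → ℂ) (hψ : ψ ≠ 0) (h : O.mulVec ψ = (μ : ℂ) • ψ) (hμ : 1 < |μ|) :
    ∃ χ : (Fin 2 × Fin 2) → ℂ, star χ ⬝ᵥ χ = 1 ∧ 1 < ‖star χ ⬝ᵥ O.mulVec χ‖ := by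
  set s : ℝ := ∑ i, Complex.normSq (ψ i) with hs
  have hspos : 0 < s := by
    rcases Function.ne_iff.mp hψ with ⟨i, hi⟩
    have : 0 < Complex.normSq (ψ i) := by
      simpa [Complex.normSq_pos] using hi
    exact Finset.sum_pos' (fun j _ => Complex.normSq_nonneg _) ⟨i, Finset.mem_univ i, this⟩
  set c : ℝ := (Real.sqrt s)⁻¹ with hc
  have hcc : (c : ℝ) * c * s = 1 := by
    rw [hc, ← mul_inv, Real.mul_self_sqrt hspos.le]
    field_simp
  refine ⟨(c : ℂ) • ψ, ?_, ?_⟩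
  · rw [star_smul, smul_dotProduct, dotProduct_smul, star_dot_self, ← hs]
    rw [smul_eq_mul, smul_eq_mul]
    have : (starRingEnd ℂ) (c : ℂ) = (c : ℂ) := Complex.conj_ofReal c
    rw [Complex.star_def, this]
    norm_cast
    rw [← mul_assoc]
    exact_mod_cast hcc
  · rw [Matrix.mulVec_smul, h, star_smul, smul_dotProduct, dotProduct_smul, dotProduct_smul,
      star_dot_self, ← hs]
    rw [Complex.star_def, Complex.conj_ofReal]
    rw [smul_eq_mul, smul_eq_mul, smul_eq_mul]
    have e : ((c : ℂ) * ((c : ℂ) * ((μ : ℂ) * (s : ℂ)))) = (μ : ℂ) * ((c * c * s : ℝ) : ℂ) := by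
      push_cast; ring
    rw [e, hcc]
    simpa using hμ

/-- Theorem 1: for unit vectors `u₁, u₂` (Alice) and orthonormal `v₁, v₂` (Bob), some two-qubit
pure state violates the 2-settings linear steering inequality (`|⟨ψ, Oψ⟩| > 1`) iff Alice's
observables `u₁·σ` and `u₂·σ` do not commute. -/
theorem steering_violation_iff_noncommuting (u₁ u₂ v₁ v₂ : Fin 3 → ℝ)
    (hu₁ : u₁ ⬝ᵥ u₁ = 1) (hu₂ : u₂ ⬝ᵥ u₂ = 1) (hv₁ : v₁ ⬝ᵥ v₁ = 1) (hv₂ : v₂ ⬝ᵥ v₂ = 1)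
    (hv₁₂ : v₁ ⬝ᵥ v₂ = 0)
    (O : Matrix (Fin 2 × Fin 2) (Fin 2 × Fin 2) ℂ)
    (hO : O = ((1 / Real.sqrt 2 : ℝ) : ℂ) •
      (pauliDot u₁ ⊗ₖ pauliDot v₁ + pauliDot u₂ ⊗ₖ pauliDot v₂)) :
    (∃ ψ : (Fin 2 × Fin 2) → ℂ, star ψ ⬝ᵥ ψ = 1 ∧ 1 < ‖star ψ ⬝ᵥ O.mulVec ψ‖) ↔
      pauliDot u₁ * pauliDot u₂ ≠ pauliDot u₂ * pauliDot u₁ := by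
  have hOO := O_sq u₁ u₂ v₁ v₂ hu₁ hu₂ hv₁ hv₂ hv₁₂ O hO
  have comm_iff : pauliDot u₁ * pauliDot u₂ = pauliDot u₂ * pauliDot u₁ ↔ crossP u₁ u₂ = 0 := by
    rw [pauli_mul, pauli_mul u₂ u₁, dotProduct_comm u₂ u₁, crossP_swap u₁ u₂, pauliDot_neg, smul_neg]
    constructor
    · intro h
      have h2 : Complex.I • pauliDot (crossP u₁ u₂) = -(Complex.I • pauliDot (crossP u₁ u₂)) :=
        add_left_cancel h
      have h3 : Complex.I • pauliDot (crossP u₁ u₂) + Complex.I • pauliDot (crossP u₁ u₂) = 0 :=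
        add_eq_zero_iff_eq_neg.mpr h2
      rw [← two_smul ℂ, smul_smul] at h3
      have h4 : pauliDot (crossP u₁ u₂) = 0 := by
        rcases smul_eq_zero.mp h3 with h | h
        · exfalso
          have : (2 : ℂ) * Complex.I ≠ 0 := by
            simp [Complex.I_ne_zero]
          exact this h
        · exact h
      exact pauliDot_eq_zero_iff.mp h4
    · intro h
      rw [h, pauliDot_zero]
      simp
  have hH : Oᴴ = O := by
    rw [hO, Matrix.conjTranspose_smul, Matrix.conjTranspose_add, kronecker_conjT, kronecker_conjT,
      pauliDot_conjT, pauliDot_conjT, pauliDot_conjT, pauliDot_conjT]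
    congr 1
    exact Complex.conj_ofReal _
  constructor
  · rintro ⟨ψ, hunit, hviol⟩ heq
    -- commuting case : O² = 1, contradiction via Cauchy-Schwarz
    have hw0 : crossP u₁ u₂ = 0 := comm_iff.mp heq
    have hOO1 : O * O = 1 := by
      rw [hOO, hw0, pauliDot_zero, zero_kronecker, sub_zero]
    have hOψ : star (O.mulVec ψ) ⬝ᵥ (O.mulVec ψ) = 1 := by
      rw [Matrix.star_mulVec, hH, ← Matrix.dotProduct_mulVec, Matrix.mulVec_mulVec, hOO1,
        Matrix.one_mulVec, hunit]
    set x : EuclideanSpace ℂ (Fin 2 × Fin 2) := (WithLp.equiv 2 _).symm ψ with hx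
    set y : EuclideanSpace ℂ (Fin 2 × Fin 2) := (WithLp.equiv 2 _).symm (O.mulVec ψ) with hy
    have hxy : (inner ℂ x y : ℂ) = star ψ ⬝ᵥ O.mulVec ψ := by
      rw [EuclideanSpace.inner_eq_star_dotProduct]
      simp [hx, hy, dotProduct_comm]
    have hxx : (inner ℂ x x : ℂ) = 1 := by
      rw [EuclideanSpace.inner_eq_star_dotProduct]
      simpa [hx, dotProduct_comm] using hunit
    have hyy : (inner ℂ y y : ℂ) = 1 := by
      rw [EuclideanSpace.inner_eq_star_dotProduct]
      simpa [hy, dotProduct_comm] using hOψ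
    have hnx : ‖x‖ = 1 := by
      rw [norm_eq_sqrt_re_inner (𝕜 := ℂ), hxx]
      simp
    have hny : ‖y‖ = 1 := by
      rw [norm_eq_sqrt_re_inner (𝕜 := ℂ), hyy]
      simp
    have hcs := norm_inner_le_norm (𝕜 := ℂ) x y
    rw [hnx, hny, hxy] at hcs
    linarith
  · intro hne
    have hw : crossP u₁ u₂ ≠ 0 := fun h => hne (comm_iff.mpr h)
    set w := crossP u₁ u₂ with hwdef
    set n := crossP v₁ v₂ with hndef
    have hwpos : 0 < w ⬝ᵥ w := by
      have hnn : 0 ≤ w ⬝ᵥ w := by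
        simp only [dotProduct]
        exact Finset.sum_nonneg fun i _ => mul_self_nonneg _
      have hne : w ⬝ᵥ w ≠ 0 := fun h => hw (dotProduct_self_eq_zero.mp h)
      exact lt_of_le_of_ne hnn (Ne.symm hne)
    set r := Real.sqrt (w ⬝ᵥ w) with hrdef
    have hr : 0 < r := Real.sqrt_pos.mpr hwpos
    have hr2 : r * r = w ⬝ᵥ w := Real.mul_self_sqrt hwpos.le
    have hnn1 : n ⬝ᵥ n = 1 := by
      rw [hndef, crossP_dot, hv₁, hv₂, hv₁₂]; ring
    have hWW : pauliDot w * pauliDot w = ((w ⬝ᵥ w : ℝ) : ℂ) • 1 := by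
      rw [pauli_mul, crossP_self, pauliDot_zero]; simp
    have hNN : pauliDot n * pauliDot n = 1 := pauli_sq hnn1
    set M := pauliDot w ⊗ₖ pauliDot n with hMdef
    have hM2 : M * M = ((w ⬝ᵥ w : ℝ) : ℂ) • (1 : Matrix (Fin 2 × Fin 2) (Fin 2 × Fin 2) ℂ) := by
      rw [hMdef, ← mul_kronecker_mul, hWW, hNN, smul_kronecker, one_kronecker_one]
    have hexφ : ∃ i, M.mulVec (Pi.single i 1) ≠ (r : ℂ) • (Pi.single i 1 : (Fin 2 × Fin 2) → ℂ) := by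
      by_contra hall
      push_neg at hall
      have hdiag : ∀ i, M i i = (r : ℂ) := by
        intro i
        have h := congrFun (hall i) i
        simpa [Matrix.mulVec_single] using h
      have htr : M.trace = 4 * (r : ℂ) := by
        rw [Matrix.trace]
        simp only [Matrix.diag_apply, hdiag]
        rw [Finset.sum_const, Finset.card_univ]
        simp
        try ring
      have htr0 : M.trace = 0 := by
        rw [hMdef, trace_kronecker, pauliDot_trace]
        simp
      rw [htr0] at htr
      have : (r : ℂ) = 0 := by
        field_simp at htr
        simpa using htr.symm
      exact hr.ne' (by exact_mod_cast this)
    obtain ⟨i0, hi0⟩ := hexφ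
    set φ : (Fin 2 × Fin 2) → ℂ := Pi.single i0 1 with hφdef
    set ψ₀ := M.mulVec φ - (r : ℂ) • φ with hψ₀def
    have hψ₀ne : ψ₀ ≠ 0 := by
      intro h
      apply hi0
      rw [hψ₀def, sub_eq_zero] at h
      exact h
    have hr2c : (r : ℂ) * (r : ℂ) = ((w ⬝ᵥ w : ℝ) : ℂ) := by
      exact_mod_cast congrArg (Complex.ofReal) hr2
    have hMψ₀ : M.mulVec ψ₀ = (-(r : ℂ)) • ψ₀ := by
      rw [hψ₀def, Matrix.mulVec_sub, Matrix.mulVec_smul, Matrix.mulVec_mulVec, hM2,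
        Matrix.smul_mulVec, Matrix.one_mulVec, ← hr2c]
      module
    have hO2ψ₀ : (O * O).mulVec ψ₀ = ((1 + r : ℝ) : ℂ) • ψ₀ := by
      rw [hOO, Matrix.sub_mulVec, Matrix.one_mulVec, hMψ₀]
      push_cast
      module
    set lam := Real.sqrt (1 + r) with hlamdef
    have hlam1 : 1 < lam := by
      rw [hlamdef]
      have : (1 : ℝ) < 1 + r := by linarith
      nlinarith [Real.sq_sqrt (by linarith : (0:ℝ) ≤ 1 + r), Real.sqrt_nonneg (1 + r)]
    have hlam2 : lam * lam = 1 + r := Real.mul_self_sqrt (by linarith)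
    have hlam2c : (lam : ℂ) * (lam : ℂ) = ((1 + r : ℝ) : ℂ) := by
      exact_mod_cast congrArg (Complex.ofReal) hlam2
    set ψ₁ := O.mulVec ψ₀ + (lam : ℂ) • ψ₀ with hψ₁def
    by_cases hψ₁ : ψ₁ = 0
    · have hOψ₀ : O.mulVec ψ₀ = ((-lam : ℝ) : ℂ) • ψ₀ := by
        rw [hψ₁def, add_eq_zero_iff_eq_neg] at hψ₁
        rw [hψ₁]
        push_cast
        module
      exact exists_unit_of_eigen O (-lam) ψ₀ hψ₀ne hOψ₀
        (by rwa [abs_neg, abs_of_pos (by linarith)])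
    · have hOψ₁ : O.mulVec ψ₁ = ((lam : ℝ) : ℂ) • ψ₁ := by
        rw [hψ₁def, Matrix.mulVec_add, Matrix.mulVec_smul, Matrix.mulVec_mulVec, hO2ψ₀,
          ← hlam2c]
        module
      exact exists_unit_of_eigen O lam ψ₁ hψ₁ hOψ₁
        (by rwa [abs_of_pos (by linarith)])
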